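/- (Strict decrease unless fixed) If θ_{t+1} is the Jeffrey posterior of θ_t and θ_{t+1} ≠ θ_t, then D_KL(τ || p_{θ_{t+1}}) + D_KL(θ_{t+1} || θ_t) ≤ D_KL(τ || p_{θ_t}); in particular D_KL(τ || p_{θ_{t+1}}) < D_KL(τ || p_{θ_t}) whenever θ_{t+1} ≠ θ_t. -/

import Mathlib

open Finset Real

lemma log_term_le {a b : ℝ} (ha : 0 ≤ a) (hb : 0 ≤ b) (hab : b = 0 → a = 0) :
    a - b ≤ a * Real.log (a / b) := by
  rcases ha.lt_or_eq with h | h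
  · have hb0 : b ≠ 0 := fun hb0 => by simp [hab hb0] at h
    have hb' : 0 < b := hb.lt_of_ne (Ne.symm hb0)
    have hlog := Real.log_le_sub_one_of_pos (div_pos hb' h)
    have hinv : Real.log (a / b) = - Real.log (b / a) := by
      rw [← Real.log_inv, inv_div]
    have h2 : a * Real.log (b / a) ≤ b - a := by
      have h4 := mul_le_mul_of_nonneg_left hlog h.le
      have h3 : a * (b / a - 1) = b - a := by field_simp
      linarith
    rw [hinv]; linarith
  · rw [← h]; simpa using hb

lemma log_term_lt {a b : ℝ} (ha : 0 ≤ a) (hb : 0 ≤ b) (hab : b = 0 → a = 0)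
    (hne : a ≠ b) : a - b < a * Real.log (a / b) := by
  rcases ha.lt_or_eq with h | h
  · have hb0 : b ≠ 0 := fun hb0 => by simp [hab hb0] at h
    have hb' : 0 < b := hb.lt_of_ne (Ne.symm hb0)
    have hlog := Real.log_lt_sub_one_of_pos (div_pos hb' h)
      (by field_simp; exact fun hh => hne ((div_eq_one_iff_eq (ne_of_gt h)).mp hh).symm)
    have hinv : Real.log (a / b) = - Real.log (b / a) := by
      rw [← Real.log_inv, inv_div]
    have h2 : a * Real.log (b / a) < b - a := by
      have h4 := mul_lt_mul_of_pos_left hlog h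
      have h3 : a * (b / a - 1) = b - a := by field_simp
      linarith
    rw [hinv]; linarith
  · have hb' : 0 < b := hb.lt_of_ne (fun hh => hne (by rw [← h, ← hh]))
    rw [← h]; simpa using hb'

theorem jeffrey_strict_decrease
    {X Y : Type} [Fintype X] [Fintype Y]
    (C : X → Y → ℝ) (hC : ∀ x y, 0 ≤ C x y) (hCrow : ∀ x, ∑ y, C x y = 1)
    (τ : Y → ℝ) (hτ : ∀ y, 0 ≤ τ y) (hτ1 : ∑ y, τ y = 1)
    (θt : X → ℝ) (hθt : ∀ x, 0 ≤ θt x) (hθt1 : ∑ x, θt x = 1)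
    (hpos : ∀ y, 0 < τ y → 0 < ∑ x, θt x * C x y)
    (θt1 : X → ℝ)
    (hθt1def : ∀ x, θt1 x = ∑ y, τ y * (θt x * C x y / (∑ x', θt x' * C x' y)))
    (hne : θt1 ≠ θt) :
    ((∑ y, τ y * Real.log (τ y / (∑ x, θt1 x * C x y)))
        + (∑ x, θt1 x * Real.log (θt1 x / θt x))
      ≤ (∑ y, τ y * Real.log (τ y / (∑ x, θt x * C x y))))
    ∧ (∑ y, τ y * Real.log (τ y / (∑ x, θt1 x * C x y)))
      < (∑ y, τ y * Real.log (τ y / (∑ x, θt x * C x y))) := by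
  classical
  have hθt1nn : ∀ x, 0 ≤ θt1 x := by
    intro x; rw [hθt1def]
    refine Finset.sum_nonneg fun y _ => mul_nonneg (hτ y) (div_nonneg
      (mul_nonneg (hθt x) (hC x y))
      (Finset.sum_nonneg fun x' _ => mul_nonneg (hθt x') (hC x' y)))
  have hptnn : ∀ y, 0 ≤ ∑ x, θt x * C x y :=
    fun y => Finset.sum_nonneg fun x _ => mul_nonneg (hθt x) (hC x y)
  have hp1nn : ∀ y, 0 ≤ ∑ x, θt1 x * C x y :=
    fun y => Finset.sum_nonneg fun x _ => mul_nonneg (hθt1nn x) (hC x y)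
  have hτ0 : ∀ y, (∑ x, θt x * C x y) = 0 → τ y = 0 := by
    intro y h
    by_contra hτy
    have := hpos y ((hτ y).lt_of_ne (Ne.symm hτy))
    rw [h] at this; exact lt_irrefl 0 this
  have hqnn : ∀ x y, 0 ≤ τ y * (θt x * C x y / ∑ x', θt x' * C x' y) :=
    fun x y => mul_nonneg (hτ y) (div_nonneg (mul_nonneg (hθt x) (hC x y)) (hptnn y))
  have hmnn : ∀ x y, 0 ≤ τ y * (θt1 x * C x y / ∑ x', θt1 x' * C x' y) :=
    fun x y => mul_nonneg (hτ y) (div_nonneg (mul_nonneg (hθt1nn x) (hC x y)) (hp1nn y))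
  have hsumq : ∀ y, (∑ x, τ y * (θt x * C x y / ∑ x', θt x' * C x' y)) = τ y := by
    intro y
    rcases eq_or_ne (∑ x', θt x' * C x' y) 0 with h | h
    · simp only [h, div_zero, mul_zero, Finset.sum_const_zero]
      exact (hτ0 y h).symm
    · rw [← Finset.mul_sum, ← Finset.sum_div, div_self h, mul_one]
  have hsumm : ∀ y, (∑ x, τ y * (θt1 x * C x y / ∑ x', θt1 x' * C x' y)) ≤ τ y := by
    intro y
    rcases eq_or_ne (∑ x', θt1 x' * C x' y) 0 with h | h
    · simp only [h, div_zero, mul_zero, Finset.sum_const_zero]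
      exact hτ y
    · rw [← Finset.mul_sum, ← Finset.sum_div, div_self h, mul_one]
  have hsum1 : ∑ x, θt1 x = 1 := by
    calc ∑ x, θt1 x = ∑ x, ∑ y, τ y * (θt x * C x y / ∑ x', θt x' * C x' y) :=
          Finset.sum_congr rfl fun x _ => hθt1def x
    _ = ∑ y, ∑ x, τ y * (θt x * C x y / ∑ x', θt x' * C x' y) := Finset.sum_comm
    _ = ∑ y, τ y := Finset.sum_congr rfl fun y _ => hsumq y
    _ = 1 := hτ1
  have hac : ∀ x, θt x = 0 → θt1 x = 0 := by
    intro x h; rw [hθt1def]; simp [h]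
  -- strict positivity of D(θt1 || θt)
  have hBpos : 0 < ∑ x, θt1 x * Real.log (θt1 x / θt x) := by
    obtain ⟨x0, hx0⟩ := Function.ne_iff.mp hne
    have hlt : ∑ x, (θt1 x - θt x) < ∑ x, θt1 x * Real.log (θt1 x / θt x) :=
      Finset.sum_lt_sum (fun x _ => log_term_le (hθt1nn x) (hθt x) (hac x))
        ⟨x0, Finset.mem_univ x0, log_term_lt (hθt1nn x0) (hθt x0) (hac x0) hx0⟩
    have hz : ∑ x, (θt1 x - θt x) = 0 := by
      rw [Finset.sum_sub_distrib, hsum1, hθt1, sub_self]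
    linarith
  -- termwise inequality
  have hterm : ∀ y x,
      τ y * (θt x * C x y / ∑ x', θt x' * C x' y)
        - τ y * (θt1 x * C x y / ∑ x', θt1 x' * C x' y)
      ≤ τ y * (θt x * C x y / ∑ x', θt x' * C x' y) *
        (Real.log (τ y / ∑ x', θt x' * C x' y)
          - Real.log (τ y / ∑ x', θt1 x' * C x' y)
          - Real.log (θt1 x / θt x)) := by
    intro y x
    rcases (hqnn x y).lt_or_eq with hq | hq
    · -- positive case
      have hτy : 0 < τ y := by
        rcases mul_pos_iff.1 hq with ⟨h1, _⟩ | ⟨h1, _⟩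
        · exact h1
        · linarith [hτ y]
      have hd : 0 < θt x * C x y / ∑ x', θt x' * C x' y := by
        rcases mul_pos_iff.1 hq with ⟨_, h2⟩ | ⟨h1, _⟩
        · exact h2
        · linarith [hτ y]
      have hptpos : 0 < ∑ x', θt x' * C x' y := by
        rcases (hptnn y).lt_or_eq with h | h
        · exact h
        · rw [← h] at hd; simp at hd
      have hn : 0 < θt x * C x y := by
        rcases div_pos_iff.1 hd with ⟨h1, _⟩ | ⟨_, h2⟩
        · exact h1
        · linarith [hptnn y]
      have hθtx : 0 < θt x := by
        rcases mul_pos_iff.1 hn with ⟨h1, _⟩ | ⟨h1, _⟩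
        · exact h1
        · linarith [hθt x]
      have hCxy : 0 < C x y := by
        rcases mul_pos_iff.1 hn with ⟨_, h2⟩ | ⟨_, h2⟩
        · exact h2
        · linarith [hC x y]
      have hθt1x : 0 < θt1 x := by
        have hle : τ y * (θt x * C x y / ∑ x', θt x' * C x' y)
            ≤ ∑ y', τ y' * (θt x * C x y' / ∑ x', θt x' * C x' y') :=
          Finset.single_le_sum (fun y' _ => hqnn x y') (Finset.mem_univ y)
        rw [← hθt1def x] at hle
        linarith
      have hp1pos : 0 < ∑ x', θt1 x' * C x' y := by
        have hle : θt1 x * C x y ≤ ∑ x', θt1 x' * C x' y :=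
          Finset.single_le_sum (fun x' _ => mul_nonneg (hθt1nn x') (hC x' y))
            (Finset.mem_univ x)
        have := mul_pos hθt1x hCxy
        linarith
      have hmpos : 0 < τ y * (θt1 x * C x y / ∑ x', θt1 x' * C x' y) :=
        mul_pos hτy (div_pos (mul_pos hθt1x hCxy) hp1pos)
      have hlog : Real.log (τ y / ∑ x', θt x' * C x' y)
          - Real.log (τ y / ∑ x', θt1 x' * C x' y)
          - Real.log (θt1 x / θt x)
          = Real.log ((τ y * (θt x * C x y / ∑ x', θt x' * C x' y))
              / (τ y * (θt1 x * C x y / ∑ x', θt1 x' * C x' y))) := by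
        have hqm : (τ y * (θt x * C x y / ∑ x', θt x' * C x' y))
            / (τ y * (θt1 x * C x y / ∑ x', θt1 x' * C x' y))
            = (θt x * (∑ x', θt1 x' * C x' y)) / (θt1 x * (∑ x', θt x' * C x' y)) := by
          field_simp
        rw [hqm,
          Real.log_div (ne_of_gt hτy) (ne_of_gt hptpos),
          Real.log_div (ne_of_gt hτy) (ne_of_gt hp1pos),
          Real.log_div (ne_of_gt hθt1x) (ne_of_gt hθtx),
          Real.log_div (by positivity) (by positivity),
          Real.log_mul (ne_of_gt hθtx) (ne_of_gt hp1pos),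
          Real.log_mul (ne_of_gt hθt1x) (ne_of_gt hptpos)]
        ring
      rw [hlog]
      exact log_term_le (le_of_lt hq) (le_of_lt hmpos)
        (fun h => absurd h (ne_of_gt hmpos))
    · rw [← hq]
      simp only [zero_mul, zero_sub]
      simpa using hmnn x y
  -- assembling the double sums
  have hswap : ∑ y, ∑ x, τ y * (θt x * C x y / ∑ x', θt x' * C x' y)
        * Real.log (θt1 x / θt x)
      = ∑ x, θt1 x * Real.log (θt1 x / θt x) := by
    rw [Finset.sum_comm]
    refine Finset.sum_congr rfl fun x _ => ?_
    rw [← Finset.sum_mul, ← hθt1def x]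
  have hexpand : ∑ y, ∑ x,
      τ y * (θt x * C x y / ∑ x', θt x' * C x' y) *
        (Real.log (τ y / ∑ x', θt x' * C x' y)
          - Real.log (τ y / ∑ x', θt1 x' * C x' y)
          - Real.log (θt1 x / θt x))
      = (∑ y, τ y * Real.log (τ y / (∑ x, θt x * C x y)))
        - (∑ y, τ y * Real.log (τ y / (∑ x, θt1 x * C x y)))
        - (∑ x, θt1 x * Real.log (θt1 x / θt x)) := by
    have hsplit : ∀ y x,
        τ y * (θt x * C x y / ∑ x', θt x' * C x' y) *
          (Real.log (τ y / ∑ x', θt x' * C x' y)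
            - Real.log (τ y / ∑ x', θt1 x' * C x' y)
            - Real.log (θt1 x / θt x))
        = τ y * (θt x * C x y / ∑ x', θt x' * C x' y) *
            (Real.log (τ y / ∑ x', θt x' * C x' y)
              - Real.log (τ y / ∑ x', θt1 x' * C x' y))
          - τ y * (θt x * C x y / ∑ x', θt x' * C x' y) *
            Real.log (θt1 x / θt x) := fun y x => by ring
    calc ∑ y, ∑ x,
        τ y * (θt x * C x y / ∑ x', θt x' * C x' y) *
          (Real.log (τ y / ∑ x', θt x' * C x' y)
            - Real.log (τ y / ∑ x', θt1 x' * C x' y)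
            - Real.log (θt1 x / θt x))
        = (∑ y, ∑ x, τ y * (θt x * C x y / ∑ x', θt x' * C x' y) *
            (Real.log (τ y / ∑ x', θt x' * C x' y)
              - Real.log (τ y / ∑ x', θt1 x' * C x' y)))
          - ∑ y, ∑ x, τ y * (θt x * C x y / ∑ x', θt x' * C x' y) *
            Real.log (θt1 x / θt x) := by
          rw [← Finset.sum_sub_distrib]
          refine Finset.sum_congr rfl fun y _ => ?_
          rw [← Finset.sum_sub_distrib]
          exact Finset.sum_congr rfl fun x _ => hsplit y x
    _ = (∑ y, τ y * (Real.log (τ y / ∑ x', θt x' * C x' y)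
            - Real.log (τ y / ∑ x', θt1 x' * C x' y)))
          - ∑ x, θt1 x * Real.log (θt1 x / θt x) := by
          rw [hswap]
          congr 1
          refine Finset.sum_congr rfl fun y _ => ?_
          rw [← Finset.sum_mul, hsumq y]
    _ = (∑ y, τ y * Real.log (τ y / (∑ x, θt x * C x y)))
        - (∑ y, τ y * Real.log (τ y / (∑ x, θt1 x * C x y)))
        - (∑ x, θt1 x * Real.log (θt1 x / θt x)) := by
          have hsplit2 : ∑ y, τ y * (Real.log (τ y / ∑ x', θt x' * C x' y)
              - Real.log (τ y / ∑ x', θt1 x' * C x' y))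
              = (∑ y, τ y * Real.log (τ y / ∑ x, θt x * C x y))
                - ∑ y, τ y * Real.log (τ y / ∑ x, θt1 x * C x y) := by
            rw [← Finset.sum_sub_distrib]
            exact Finset.sum_congr rfl fun y _ => by ring
          rw [hsplit2]
  have hlb : (0:ℝ) ≤ ∑ y, ∑ x,
      (τ y * (θt x * C x y / ∑ x', θt x' * C x' y)
        - τ y * (θt1 x * C x y / ∑ x', θt1 x' * C x' y)) := by
    refine Finset.sum_nonneg fun y _ => ?_
    rw [Finset.sum_sub_distrib, hsumq y]
    have := hsumm y
    linarith
  have hdouble : ∑ y, ∑ x,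
      (τ y * (θt x * C x y / ∑ x', θt x' * C x' y)
        - τ y * (θt1 x * C x y / ∑ x', θt1 x' * C x' y))
      ≤ ∑ y, ∑ x,
      τ y * (θt x * C x y / ∑ x', θt x' * C x' y) *
        (Real.log (τ y / ∑ x', θt x' * C x' y)
          - Real.log (τ y / ∑ x', θt1 x' * C x' y)
          - Real.log (θt1 x / θt x)) :=
    Finset.sum_le_sum fun y _ => Finset.sum_le_sum fun x _ => hterm y x
  rw [hexpand] at hdouble
  constructor
  · linarith
  · linarith
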